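/- Let f be ρ-weakly convex and C¹ on a compact convex set P with unique minimizer x*, satisfying local μ-quadratic growth on [f ≤ f* + ζ] ∩ P with ρ < μ. Then for all x in this set, f(x) − f* ≤ (2μ/(μ − ρ)²)‖∇f(x)‖², i.e., f satisfies a local Polyak–Łojasiewicz inequality. -/
import Mathlib


open Set
open scoped RealInnerProductSpace

/-- local Polyak–Łojasiewicz inequality from weak convexity and
local quadratic growth. -/
theorem local_pl_inequality {n : ℕ}
    (P : Set (EuclideanSpace ℝ (Fin n)))
    (hP : IsCompact P) (hPconv : Convex ℝ P) (hPne : P.Nonempty)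
    (f : EuclideanSpace ℝ (Fin n) → ℝ)
    (f' : EuclideanSpace ℝ (Fin n) → EuclideanSpace ℝ (Fin n))
    (hf' : ∀ x ∈ P, HasGradientAt f (f' x) x)
    (ρ μ ζ : ℝ) (hρ : 0 ≤ ρ) (hρμ : ρ < μ) (hζ : 0 < ζ)
    (hweak : ∀ x ∈ P, ∀ y ∈ P, f y - f x ≥ ⟪f' x, y - x⟫ - (ρ / 2) * ‖y - x‖ ^ 2)
    (xstar : EuclideanSpace ℝ (Fin n)) (hxstar : xstar ∈ P)
    (hmin : IsMinOn f P xstar)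
    (huniq : ∀ y ∈ P, IsMinOn f P y → y = xstar)
    (hqg : ∀ x ∈ P, f x ≤ f xstar + ζ →
      ‖x - xstar‖ ^ 2 ≤ (2 / μ) * (f x - f xstar)) :
    ∀ x ∈ P, f x ≤ f xstar + ζ →
      f x - f xstar ≤ (2 * μ / (μ - ρ) ^ 2) * ‖f' x‖ ^ 2 := by
  intro x hx hle
  have hμ : 0 < μ := lt_of_le_of_lt hρ hρμ
  have hD : 0 ≤ f x - f xstar := by
    have := hmin hx
    simp only [Set.mem_setOf_eq] at this
    linarith
  have hr2 := hqg x hx hle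
  have h1 := hweak x hx xstar hxstar
  have hInner : -(‖f' x‖ * ‖xstar - x‖) ≤ ⟪f' x, xstar - x⟫ :=
    (abs_le.mp (abs_real_inner_le_norm (f' x) (xstar - x))).1
  have hrr : ‖xstar - x‖ = ‖x - xstar‖ := norm_sub_rev _ _
  rw [hrr] at hInner h1
  set r := ‖x - xstar‖ with hrdef
  have hrnn : 0 ≤ r := norm_nonneg _
  have hgnn : 0 ≤ ‖f' x‖ := norm_nonneg _
  -- D ≤ ‖g‖ r + (ρ/2) r²
  have h2 : f x - f xstar ≤ ‖f' x‖ * r + (ρ / 2) * r ^ 2 := by linarith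
  have hr2' : μ * r ^ 2 ≤ 2 * (f x - f xstar) := by
    rw [div_mul_eq_mul_div, le_div_iff₀ hμ] at hr2
    linarith
  have key : (μ - ρ) * (f x - f xstar) ≤ μ * (‖f' x‖ * r) := by
    nlinarith [mul_le_mul_of_nonneg_left h2 hμ.le, mul_le_mul_of_nonneg_left hr2' hρ]
  have sq : ((μ - ρ) * (f x - f xstar)) ^ 2 ≤ (μ * (‖f' x‖ * r)) ^ 2 := by
    have h0 : 0 ≤ (μ - ρ) * (f x - f xstar) := by nlinarith
    nlinarith
  have sq2 : (μ - ρ) ^ 2 * (f x - f xstar) ^ 2 ≤ 2 * μ * ‖f' x‖ ^ 2 * (f x - f xstar) := by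
    nlinarith [sq, mul_le_mul_of_nonneg_left hr2' (show (0:ℝ) ≤ μ * ‖f' x‖ ^ 2 by positivity)]
  rcases eq_or_lt_of_le hD with h | h
  · rw [← h]
    positivity
  · have hfin : (μ - ρ) ^ 2 * (f x - f xstar) ≤ 2 * μ * ‖f' x‖ ^ 2 := by
      nlinarith
    rw [div_mul_eq_mul_div, le_div_iff₀ (pow_pos (sub_pos.mpr hρμ) 2)]
    linarith
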